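/- For n ≥ k ≥ 0, the coefficient of x^n in x^k·(1 + x/sqrt(1-4x))·C(x)^{k+1} equals ((k+1)/(n+1) + (n-k)/(2n-k))·binom(2n-k, n). -/

import Mathlib

open PowerSeries

/-- The Catalan generating function C(x) = Σ_{n≥0} C_n x^n. -/
noncomputable def catalanGF : PowerSeries ℚ := PowerSeries.mk fun n => (catalan n : ℚ)

/-- The series 1/sqrt(1-4x) = Σ_{n≥0} binom(2n,n) x^n. -/
noncomputable def invSqrtGF : PowerSeries ℚ := PowerSeries.mk fun n => ((2 * n).choose n : ℚ)


lemma catalanGF_eq : catalanGF = 1 + X * catalanGF ^ 2 := by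
  ext m
  cases m with
  | zero => simp [catalanGF]
  | succ m =>
    rw [map_add, coeff_succ_X_mul]
    simp only [catalanGF, coeff_mk, pow_two, coeff_mul, coeff_one]
    rw [catalan_succ']
    push_cast
    simp

lemma ofNat_eq (a : ℕ) [a.AtLeastTwo] :
    (OfNat.ofNat a : PowerSeries ℚ) = C (R := ℚ) (OfNat.ofNat a) := (map_ofNat _ _).symm

lemma sq_eq : (1 - 2 * X * catalanGF) ^ 2 = 1 - 4 * X := by
  linear_combination (-4*(X:PowerSeries ℚ)) * catalanGF_eq

lemma deriv_invSqrt : (1 - 4 * X) * (d⁄dX ℚ invSqrtGF) = 2 * invSqrtGF := by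
  ext m
  rw [sub_mul, one_mul, map_sub, mul_assoc, ofNat_eq 4, ofNat_eq 2, coeff_C_mul, coeff_C_mul]
  cases m with
  | zero =>
    simp [coeff_derivative, invSqrtGF, coeff_mk]

  | succ m =>
    rw [coeff_succ_X_mul, coeff_derivative, coeff_derivative]
    simp only [invSqrtGF, coeff_mk]
    have h := Nat.succ_mul_centralBinom_succ (m + 1)
    simp only [Nat.centralBinom] at h
    have h' : ((m + 1 + 1 : ℕ) : ℚ) * ((2 * (m + 1 + 1)).choose (m + 1 + 1)) =
        2 * (2 * (m + 1) + 1) * ((2 * (m + 1)).choose (m + 1)) := by exact_mod_cast h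
    push_cast at h' ⊢
    linarith [h']

lemma SA_eq_one : invSqrtGF * (1 - 2 * X * catalanGF) = 1 := by
  set A : PowerSeries ℚ := 1 - 2 * X * catalanGF with hA
  have hd4 : d⁄dX ℚ (4 * X : PowerSeries ℚ) = 4 := by
    rw [ofNat_eq 4]
    simp [Derivation.leibniz, smul_eq_mul]
  have hAA' : A * (d⁄dX ℚ A) = -2 := by
    have h := congrArg (d⁄dX ℚ) sq_eq
    have hr : d⁄dX ℚ (1 - 4 * X : PowerSeries ℚ) = -4 := by
      rw [map_sub, Derivation.map_one_eq_zero, hd4, zero_sub]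
    rw [← hA, Derivation.leibniz_pow, hr] at h
    simp only [pow_one, nsmul_eq_mul, smul_eq_mul, Nat.cast_ofNat] at h
    have h2 : (2 : PowerSeries ℚ) * (A * d⁄dX ℚ A) = 2 * (-2) := by
      linear_combination h
    have : (2 : PowerSeries ℚ) ≠ 0 := by
      intro hc
      have := congrArg (constantCoeff (R := ℚ)) hc
      rw [map_ofNat, map_zero] at this
      norm_num at this
    exact mul_left_cancel₀ this h2
  have hdD : d⁄dX ℚ (invSqrtGF * A) = 0 := by
    have hnz : (1 - 4 * X : PowerSeries ℚ) ≠ 0 := by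
      intro hc
      have := congrArg (constantCoeff (R := ℚ)) hc
      rw [map_sub, map_one, map_mul, constantCoeff_X, mul_zero, sub_zero, map_zero] at this
      exact one_ne_zero this
    have key : (1 - 4 * X) * d⁄dX ℚ (invSqrtGF * A) = 0 := by
      rw [Derivation.leibniz, smul_eq_mul, smul_eq_mul]
      linear_combination A * deriv_invSqrt - invSqrtGF * (d⁄dX ℚ A) * sq_eq
        + invSqrtGF * A * hAA'
    rcases mul_eq_zero.mp key with h | h
    · exact absurd h hnz
    · exact h
  have := derivative.ext (f := invSqrtGF * A) (g := 1) (by rw [hdD]; simp) ?_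
  · exact this
  · rw [map_mul]
    have h1 : constantCoeff (R := ℚ) invSqrtGF = 1 := by simp [invSqrtGF, ← coeff_zero_eq_constantCoeff]
    have h2 : constantCoeff (R := ℚ) A = 1 := by simp [hA]
    rw [h1, h2]; simp

lemma constCoeff_catalan : constantCoeff (R := ℚ) catalanGF = 1 := by
  rw [← coeff_zero_eq_constantCoeff]
  simp [catalanGF]

lemma coeff_catalan_pow (m : ℕ) : ∀ j : ℕ,
    (coeff (R := ℚ) m) (catalanGF ^ (j + 1)) * ((m : ℚ) + j + 1)
      = ((j : ℚ) + 1) * ((2 * m + j).choose m : ℚ) := by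
  induction m with
  | zero =>
    intro j
    rw [coeff_zero_eq_constantCoeff, map_pow, constCoeff_catalan, one_pow]
    simp
  | succ m ihm =>
    intro j
    induction j with
    | zero =>
      rw [pow_one]
      simp only [catalanGF, coeff_mk]
      have h := succ_mul_catalan_eq_centralBinom (m + 1)
      rw [Nat.centralBinom] at h
      have h' : ((m : ℚ) + 1 + 1) * (catalan (m + 1) : ℚ)
          = ((2 * (m + 1)).choose (m + 1) : ℚ) := by exact_mod_cast h
      simp only [Nat.add_zero]
      push_cast
      linarith [h']
    | succ j ihj =>
      have R1 : catalanGF ^ (j + 1 + 1) = catalanGF ^ (j + 1) + X * catalanGF ^ (j + 3) := by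
        linear_combination catalanGF ^ (j + 1) * catalanGF_eq
      have hc : coeff (R := ℚ) (m + 1) (catalanGF ^ (j + 1 + 1))
          = coeff (R := ℚ) (m + 1) (catalanGF ^ (j + 1)) + coeff (R := ℚ) m (catalanGF ^ (j + 3)) := by
        rw [R1, map_add, coeff_succ_X_mul]
      have h1 := ihj
      have h2 := ihm (j + 2)
      rw [show 2 * (m + 1) + j = 2 * m + j + 2 from by omega] at h1
      rw [show 2 * m + (j + 2) = 2 * m + j + 2 from by omega] at h2
      have e1n := Nat.choose_succ_right_eq (2 * m + j + 2) m
      rw [show 2 * m + j + 2 - m = m + j + 2 from by omega] at e1n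
      have e1 : ((2 * m + j + 2).choose (m + 1) : ℚ) * ((m : ℚ) + 1)
          = ((2 * m + j + 2).choose m : ℚ) * ((m : ℚ) + j + 2) := by exact_mod_cast e1n
      have e2n := Nat.add_one_mul_choose_eq (2 * m + j + 2) m
      have e2 : (((2 : ℚ) * m + j + 3)) * ((2 * m + j + 2).choose m : ℚ)
          = ((2 * m + j + 3).choose (m + 1) : ℚ) * ((m : ℚ) + 1) := by exact_mod_cast e2n
      have hnz : ((m : ℚ) + 1) * ((m : ℚ) + j + 2) ≠ 0 := by positivity
      rw [show 2 * (m + 1) + (j + 1) = 2 * m + j + 3 from by omega]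
      apply mul_right_cancel₀ hnz
      rw [hc]
      push_cast at h1 h2 ⊢
      linear_combination ((m : ℚ) + j + 3) * ((m : ℚ) + 1) * h1
        + ((m : ℚ) + 1) * ((m : ℚ) + j + 2) * h2
        + ((j : ℚ) + 1) * ((m : ℚ) + j + 3) * e1
        + ((j : ℚ) + 2) * ((m : ℚ) + j + 2) * e2

lemma constCoeff_invSqrt : constantCoeff (R := ℚ) invSqrtGF = 1 := by
  rw [← coeff_zero_eq_constantCoeff]
  simp [invSqrtGF]

lemma coeff_S_pow (m : ℕ) : ∀ j : ℕ,
    (coeff (R := ℚ) m) (invSqrtGF * catalanGF ^ j) = ((2 * m + j).choose m : ℚ) := by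
  induction m with
  | zero =>
    intro j
    rw [coeff_zero_eq_constantCoeff, map_mul, map_pow, constCoeff_catalan,
      constCoeff_invSqrt, one_pow, mul_one]
    simp
  | succ m ihm =>
    intro j
    cases j with
    | zero =>
      rw [pow_zero, mul_one]
      simp [invSqrtGF]
    | succ i =>
      have R2 : invSqrtGF * catalanGF ^ (i + 1)
          = catalanGF ^ (i + 1) + X * (C (R := ℚ) 2 * (invSqrtGF * catalanGF ^ (i + 2))) := by
        rw [← ofNat_eq 2]
        linear_combination catalanGF ^ (i + 1) * SA_eq_one
      have hc : coeff (R := ℚ) (m + 1) (invSqrtGF * catalanGF ^ (i + 1))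
          = coeff (R := ℚ) (m + 1) (catalanGF ^ (i + 1)) + 2 * coeff (R := ℚ) m (invSqrtGF * catalanGF ^ (i + 2)) := by
        rw [R2, map_add, coeff_succ_X_mul, coeff_C_mul]
      have h1 := coeff_catalan_pow (m + 1) i
      have h2 := ihm (i + 2)
      rw [show 2 * (m + 1) + i = 2 * m + i + 2 from by omega] at h1
      rw [show 2 * m + (i + 2) = 2 * m + i + 2 from by omega] at h2
      have e1n := Nat.choose_succ_right_eq (2 * m + i + 2) m
      rw [show 2 * m + i + 2 - m = m + i + 2 from by omega] at e1n
      have e1 : ((2 * m + i + 2).choose (m + 1) : ℚ) * ((m : ℚ) + 1)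
          = ((2 * m + i + 2).choose m : ℚ) * ((m : ℚ) + i + 2) := by exact_mod_cast e1n
      have e2n := Nat.add_one_mul_choose_eq (2 * m + i + 2) m
      have e2 : (((2 : ℚ) * m + i + 3)) * ((2 * m + i + 2).choose m : ℚ)
          = ((2 * m + i + 3).choose (m + 1) : ℚ) * ((m : ℚ) + 1) := by exact_mod_cast e2n
      have hnz : ((m : ℚ) + 1) * ((m : ℚ) + i + 2) ≠ 0 := by positivity
      rw [show 2 * (m + 1) + (i + 1) = 2 * m + i + 3 from by omega]
      apply mul_right_cancel₀ hnz
      rw [hc]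
      push_cast at h1 h2 ⊢
      linear_combination ((m : ℚ) + 1) * h1 + 2 * ((m : ℚ) + 1) * ((m : ℚ) + i + 2) * h2
        + ((i : ℚ) + 1) * e1 + ((m : ℚ) + i + 2) * e2

/-- For n ≥ k ≥ 0, the coefficient of x^n in x^k·(1 + x/sqrt(1-4x))·C(x)^{k+1}
equals ((k+1)/(n+1) + (n-k)/(2n-k))·binom(2n-k, n). -/
theorem coeff_F_gf (n k : ℕ) (h : k ≤ n) :
    PowerSeries.coeff (R := ℚ) n
        ((X : PowerSeries ℚ) ^ k * (1 + X * invSqrtGF) * catalanGF ^ (k + 1))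
      = (((k : ℚ) + 1) / ((n : ℚ) + 1) + ((n : ℚ) - (k : ℚ)) / (2 * (n : ℚ) - (k : ℚ)))
          * ((2 * n - k).choose n : ℚ) := by
  obtain ⟨m, rfl⟩ : ∃ m, n = k + m := ⟨n - k, by omega⟩
  rw [mul_assoc, show k + m = m + k from by omega, coeff_X_pow_mul]
  have hexp : (1 + X * invSqrtGF) * catalanGF ^ (k + 1)
      = catalanGF ^ (k + 1) + X * (invSqrtGF * catalanGF ^ (k + 1)) := by ring
  rw [hexp, map_add]
  cases m with
  | zero =>
    simp only [Nat.zero_add]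
    rw [show 2 * k - k = k from by omega]
    rw [coeff_zero_eq_constantCoeff, map_mul, constantCoeff_X,
      zero_mul, add_zero, map_pow, constCoeff_catalan, one_pow, Nat.choose_self]
    have hk : ((k : ℚ) + 1) ≠ 0 := by positivity
    rw [div_self hk]
    simp
  | succ m =>
    -- first term
    have f1 := coeff_catalan_pow (m + 1) k
    rw [show 2 * (m + 1) + k = k + 2 * m + 2 from by omega] at f1
    push_cast at f1
    -- second term
    rw [coeff_succ_X_mul]
    have f2 := coeff_S_pow m (k + 1)
    rw [show 2 * m + (k + 1) = k + 2 * m + 1 from by omega] at f2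
    -- choose relations
    have en := Nat.add_one_mul_choose_eq (k + 2 * m + 1) m
    have e : ((k : ℚ) + 2 * m + 2) * ((k + 2 * m + 1).choose m : ℚ)
        = ((k + 2 * m + 2).choose (m + 1) : ℚ) * ((m : ℚ) + 1) := by exact_mod_cast en
    have sn := Nat.choose_symm (show m + 1 + k ≤ k + 2 * m + 2 from by omega)
    rw [show k + 2 * m + 2 - (m + 1 + k) = m + 1 from by omega] at sn
    -- rewrite RHS choose
    rw [show 2 * (m + 1 + k) - k = k + 2 * m + 2 from by omega, ← sn]
    have hd1 : ((m : ℚ) + 1 + (k : ℚ) + 1) ≠ 0 := by positivity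
    have hd2 : ((k : ℚ) + 2 * (m : ℚ) + 2) ≠ 0 := by positivity
    have hu : coeff (R := ℚ) (m + 1) (catalanGF ^ (k + 1))
        = ((k : ℚ) + 1) * ((k + 2 * m + 2).choose (m + 1) : ℚ) / ((m : ℚ) + 1 + (k : ℚ) + 1) := by
      rw [eq_div_iff hd1]
      linear_combination f1
    have hv : ((k + 2 * m + 1).choose m : ℚ)
        = ((m : ℚ) + 1) * ((k + 2 * m + 2).choose (m + 1) : ℚ) / ((k : ℚ) + 2 * (m : ℚ) + 2) := by
      rw [eq_div_iff hd2]
      linear_combination e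
    rw [hu, f2, hv]
    push_cast
    ring
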